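/- For the cross entropy loss, for every fixed t > 0 with t ≠ 1, the f-function f^π(t) = L̄(π) − (πt+1−π)·L̄(πt/(πt+1−π)), where L̄(η) = −η log η − (1−η) log(1−η), satisfies lim_{π→0⁺} f^π(t)/(−π log(π)(1−t)) = 1; that is, −π log(π)(1−t) is the f-function of cross entropy under ultra-imbalanced classification. -/

import Mathlib

open Filter Topology

/-- Pointwise Bayes risk of the cross entropy loss: the binary entropy
`L̄(η) = -η log η - (1-η) log (1-η)`. -/
noncomputable def ceBayesRisk (η : ℝ) : ℝ :=
  -η * Real.log η - (1 - η) * Real.log (1 - η)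

/-- The f-function of a loss with pointwise Bayes risk `L` at prior `π`:
`f^π(t) = L(π) - (π t + 1 - π) · L(π t / (π t + 1 - π))`. -/
noncomputable def fFun (L : ℝ → ℝ) (π t : ℝ) : ℝ :=
  L π - (π * t + 1 - π) * L (π * t / (π * t + 1 - π))

lemma fFun_ce_eq {t π : ℝ} (ht : 0 < t) (hπ : 0 < π) (hπ1 : π < 1) :
    fFun ceBayesRisk π t =
      -π * Real.log π * (1 - t) + π * t * Real.log t
        - (π * t + 1 - π) * Real.log (π * t + 1 - π) := by
  have hs : 0 < π * t + 1 - π := by nlinarith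
  have h1π : 0 < 1 - π := by linarith
  have h1u : 1 - π * t / (π * t + 1 - π) = (1 - π) / (π * t + 1 - π) := by
    field_simp
    ring
  simp only [fFun, ceBayesRisk, h1u]
  rw [Real.log_div (by positivity) hs.ne', Real.log_div h1π.ne' hs.ne',
    Real.log_mul hπ.ne' ht.ne']
  field_simp
  ring

lemma slope_log_s (t : ℝ) :
    Tendsto (fun π : ℝ => Real.log (π * t + 1 - π) / π) (𝓝[>] 0) (𝓝 (t - 1)) := by
  have hd : HasDerivAt (fun x : ℝ => Real.log (x * t + 1 - x)) (t - 1) 0 := by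
    have h1 : HasDerivAt (fun x : ℝ => x * t + 1 - x) (t - 1) 0 := by
      have := ((hasDerivAt_id (0:ℝ)).mul_const t).add_const 1
      have h2 := this.sub (hasDerivAt_id (0:ℝ))
      rw [one_mul] at h2
      exact h2
    have := h1.log (by norm_num)
    simpa using this
  have := (hasDerivAt_iff_tendsto_slope.mp hd).mono_left (nhdsWithin_mono _ (by
    intro x hx
    exact ne_of_gt hx : Set.Ioi (0:ℝ) ⊆ {(0:ℝ)}ᶜ))
  refine this.congr' ?_
  filter_upwards [self_mem_nhdsWithin] with π (hπ : 0 < π)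
  simp [slope_def_field, div_eq_inv_mul]

theorem cross_entropy_fFun_UIC (t : ℝ) (ht : 0 < t) (ht1 : t ≠ 1) :
    Tendsto (fun π : ℝ => fFun ceBayesRisk π t / (-π * Real.log π * (1 - t)))
      (𝓝[>] 0) (𝓝 1) := by
  have h1t : (1 : ℝ) - t ≠ 0 := by
    intro h; exact ht1 (by linarith)
  -- the remainder tends to 0
  have hlog : Tendsto Real.log (𝓝[>] (0:ℝ)) atBot :=
    Real.tendsto_log_nhdsGT_zero
  have hinv : Tendsto (fun π : ℝ => (Real.log π)⁻¹) (𝓝[>] 0) (𝓝 0) := by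
    have h1 : Tendsto (fun π : ℝ => -Real.log π) (𝓝[>] 0) atTop :=
      tendsto_neg_atBot_atTop.comp hlog
    have h2 := tendsto_inv_atTop_zero.comp h1
    have : (fun π : ℝ => (-Real.log π)⁻¹) = fun π : ℝ => -(Real.log π)⁻¹ := by
      funext π; rw [inv_neg]
    rw [Function.comp_def, this] at h2
    simpa using h2.neg
  have hs1 : Tendsto (fun π : ℝ => π * t + 1 - π) (𝓝[>] 0) (𝓝 1) := by
    have : Tendsto (fun π : ℝ => π * t + 1 - π) (𝓝 0) (𝓝 ((0:ℝ) * t + 1 - 0)) :=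
      (((continuous_id.mul continuous_const).add continuous_const).sub continuous_id).tendsto 0
    simpa using this.mono_left nhdsWithin_le_nhds
  have hB : Tendsto (fun π : ℝ => (π * t + 1 - π) * Real.log (π * t + 1 - π) / π)
      (𝓝[>] 0) (𝓝 (t - 1)) := by
    have := hs1.mul (slope_log_s t)
    simpa [mul_div_assoc] using this
  have hR : Tendsto
      (fun π : ℝ => (t * Real.log t - (π * t + 1 - π) * Real.log (π * t + 1 - π) / π)
        * (-(Real.log π)⁻¹ * (1 - t)⁻¹)) (𝓝[>] 0) (𝓝 0) := by
    have h1 : Tendsto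
        (fun π : ℝ => t * Real.log t - (π * t + 1 - π) * Real.log (π * t + 1 - π) / π)
        (𝓝[>] 0) (𝓝 (t * Real.log t - (t - 1))) := (tendsto_const_nhds).sub hB
    have h2 : Tendsto (fun π : ℝ => -(Real.log π)⁻¹ * (1 - t)⁻¹) (𝓝[>] 0) (𝓝 0) := by
      have := (hinv.neg).mul_const (1 - t)⁻¹
      simpa using this
    have := h1.mul h2
    simpa using this
  have key : Tendsto (fun π : ℝ => 1 +
      (t * Real.log t - (π * t + 1 - π) * Real.log (π * t + 1 - π) / π)
        * (-(Real.log π)⁻¹ * (1 - t)⁻¹)) (𝓝[>] 0) (𝓝 1) := by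
    simpa using (tendsto_const_nhds (x := (1:ℝ))).add hR
  refine key.congr' ?_ |>.mono_left le_rfl
  -- eventual equality on (0, 1)
  filter_upwards [self_mem_nhdsWithin, Ioo_mem_nhdsGT_of_mem (by norm_num : (0:ℝ) ∈ Set.Ico 0 1)]
    with π hπ' hπIoo
  have hπ : 0 < π := hπ'
  have hπ1 : π < 1 := hπIoo.2
  have hlogπ : Real.log π ≠ 0 := ne_of_lt (Real.log_neg hπ hπ1)
  rw [fFun_ce_eq ht hπ hπ1]
  field_simp
  ring
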